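/- Let P be a polytope with pyramidal width δ > 0, and let f be a C¹, ρ-weakly convex function satisfying local μ-quadratic growth with level ζ at a minimizer x* over P, with ρ/μ < 1. Let S be a set of vertices of P with x ∈ conv S, v^FW = argmin_{v∈P}⟨∇f(x), v⟩, and v^A = argmax_{v∈S}⟨∇f(x), v⟩. Then for all x ∈ [f ≤ f* + ζ] ∩ P: f(x) − f* ≤ (2μ/((μ−ρ)²δ²)) · ⟨∇f(x), v^A − v^FW⟩². -/

import Mathlib

open Set
open scoped RealInnerProductSpace

set_option maxHeartbeats 2000000 in
/-- upper bound on the primal gap for weakly convex functions over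
a polytope, via the pyramidal width. -/
theorem primal_gap_pyramidal_weakly_convex {n : ℕ}
    (V : Finset (EuclideanSpace ℝ (Fin n))) (hV : V.Nonempty)
    (P : Set (EuclideanSpace ℝ (Fin n)))
    (hPdef : P = convexHull ℝ (V : Set (EuclideanSpace ℝ (Fin n))))
    (δ : ℝ) (hδ : 0 < δ)
    -- `δ` is (a lower bound on) the pyramidal width of the polytope `P`:
    (hpw : ∀ ψ : EuclideanSpace ℝ (Fin n),
      ∀ S : Finset (EuclideanSpace ℝ (Fin n)), S ⊆ V →
      ∀ x' ∈ convexHull ℝ (S : Set (EuclideanSpace ℝ (Fin n))), ∀ y ∈ P, x' ≠ y →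
      ∀ vFW ∈ P, (∀ w ∈ P, ⟪ψ, vFW⟫ ≤ ⟪ψ, w⟫) →
      ∀ vA ∈ S, (∀ w ∈ S, ⟪ψ, w⟫ ≤ ⟪ψ, vA⟫) →
        δ * ⟪ψ, x' - y⟫ / ‖x' - y‖ ≤ ⟪ψ, vA - vFW⟫)
    (f : EuclideanSpace ℝ (Fin n) → ℝ)
    (f' : EuclideanSpace ℝ (Fin n) → EuclideanSpace ℝ (Fin n))
    (hf' : ∀ x ∈ P, HasGradientAt f (f' x) x)
    (ρ μ ζ : ℝ) (hρ : 0 ≤ ρ) (hμ : 0 < μ) (hρμ : ρ / μ < 1) (hζ : 0 < ζ)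
    (hweak : ∀ x ∈ P, ∀ y ∈ P, f y - f x ≥ ⟪f' x, y - x⟫ - (ρ / 2) * ‖y - x‖ ^ 2)
    (xstar : EuclideanSpace ℝ (Fin n)) (hxstar : xstar ∈ P)
    (hmin : IsMinOn f P xstar)
    (hqg : ∀ x ∈ P, f x ≤ f xstar + ζ →
      ‖x - xstar‖ ^ 2 ≤ (2 / μ) * (f x - f xstar))
    (S : Finset (EuclideanSpace ℝ (Fin n))) (hS : S ⊆ V)
    (x : EuclideanSpace ℝ (Fin n))
    (hxS : x ∈ convexHull ℝ (S : Set (EuclideanSpace ℝ (Fin n))))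
    (vFW : EuclideanSpace ℝ (Fin n)) (hvFW : vFW ∈ P)
    (hvFWmin : ∀ w ∈ P, ⟪f' x, vFW⟫ ≤ ⟪f' x, w⟫)
    (vA : EuclideanSpace ℝ (Fin n)) (hvA : vA ∈ S)
    (hvAmax : ∀ w ∈ S, ⟪f' x, w⟫ ≤ ⟪f' x, vA⟫) :
    x ∈ P → f x ≤ f xstar + ζ →
      f x - f xstar ≤
        (2 * μ / ((μ - ρ) ^ 2 * δ ^ 2)) * ⟪f' x, vA - vFW⟫ ^ 2 := by
  intro hxP hlev
  have hρμ' : ρ < μ := by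
    have := (div_lt_one hμ).mp hρμ
    linarith
  set h : ℝ := f x - f xstar with hh
  set g : ℝ := ⟪f' x, vA - vFW⟫ with hg
  by_cases hpos : 0 < h
  · have hne : x ≠ xstar := by
      intro he; rw [he] at hh; simp at hh; linarith [hh]
    have hr : 0 < ‖x - xstar‖ := by
      rw [norm_sub_pos_iff]; exact hne
    set r : ℝ := ‖x - xstar‖ with hrr
    have hqg' : r ^ 2 ≤ (2 / μ) * h := hqg x hxP hlev
    set c : ℝ := ⟪f' x, x - xstar⟫ with hc
    have hweak' := hweak x hxP xstar hxstar
    have hinner : ⟪f' x, xstar - x⟫ = -c := by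
      rw [hc, inner_sub_right, inner_sub_right]; ring
    have hnorm : ‖xstar - x‖ = r := by rw [hrr, norm_sub_rev]
    have hcge : h - (ρ / 2) * r ^ 2 ≤ c := by
      rw [hinner, hnorm] at hweak'; linarith
    have hμr : μ * r ^ 2 ≤ 2 * h := by
      rw [div_mul_eq_mul_div, le_div_iff₀ hμ] at hqg'; linarith
    have hclow2 : (μ - ρ) * h ≤ μ * c := by
      have t1 : μ * (h - (ρ / 2) * r ^ 2) ≤ μ * c :=
        mul_le_mul_of_nonneg_left hcge hμ.le
      have t2 : (ρ / 2) * (μ * r ^ 2) ≤ (ρ / 2) * (2 * h) :=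
        mul_le_mul_of_nonneg_left hμr (by linarith)
      nlinarith [t1, t2]
    have hμρ : 0 < μ - ρ := by linarith
    have hcpos : 0 < c := by nlinarith [mul_pos hμρ hpos]
    have hpw' := hpw (f' x) S hS x hxS xstar hxstar hne vFW hvFW hvFWmin vA hvA hvAmax
    have hdcg : δ * c ≤ g * r := by
      rw [div_le_iff₀ hr] at hpw'; linarith [hpw']
    have hgpos : 0 < g := by
      nlinarith [mul_pos hδ hcpos]
    have hsq : (δ * c) ^ 2 ≤ (g * r) ^ 2 := by
      have h1 : 0 ≤ δ * c := le_of_lt (mul_pos hδ hcpos)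
      nlinarith
    have hD : 0 < (μ - ρ) ^ 2 * δ ^ 2 := by positivity
    rw [show (2 * μ / ((μ - ρ) ^ 2 * δ ^ 2)) * g ^ 2
        = 2 * μ * g ^ 2 / ((μ - ρ) ^ 2 * δ ^ 2) by ring, le_div_iff₀ hD]
    -- goal : h * ((μ - ρ)^2 * δ^2) ≤ 2 * μ * g^2
    have s1 : ((μ - ρ) * h) ^ 2 ≤ (μ * c) ^ 2 := by
      have h0 : 0 ≤ (μ - ρ) * h := le_of_lt (mul_pos hμρ hpos)
      nlinarith
    have s2 : δ ^ 2 * ((μ - ρ) * h) ^ 2 ≤ δ ^ 2 * (μ * c) ^ 2 :=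
      mul_le_mul_of_nonneg_left s1 (sq_nonneg δ)
    have s3 : μ ^ 2 * (δ * c) ^ 2 ≤ μ ^ 2 * (g * r) ^ 2 :=
      mul_le_mul_of_nonneg_left hsq (sq_nonneg μ)
    have s4 : (μ * g ^ 2) * (μ * r ^ 2) ≤ (μ * g ^ 2) * (2 * h) :=
      mul_le_mul_of_nonneg_left hμr (by positivity)
    rw [← mul_le_mul_iff_of_pos_right hpos]
    nlinarith [s2, s3, s4]
  · push_neg at hpos
    have : 0 ≤ (2 * μ / ((μ - ρ) ^ 2 * δ ^ 2)) * g ^ 2 := by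
      have hμρ : 0 < μ - ρ := by
        have := (div_lt_one hμ).mp hρμ; linarith
      positivity
    linarith
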